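/- Let A ∈ GL(2, ℤ) be a 2×2 integer matrix with determinant 1 whose only complex eigenvalue is 1 (equivalently, whose characteristic polynomial is (X-1)²). Then there exist a matrix P ∈ GL(2, ℤ) with det(P) = 1 and an integer t ∈ ℤ such that P⁻¹AP = [[1, t], [0, 1]]. -/

import Mathlib

open Polynomial

/-- Every `A ∈ GL(2,ℤ)` with `det A = 1` whose only complex eigenvalue is 1 (equivalently,
whose characteristic polynomial is `(X-1)²`) is conjugate, by some `P ∈ GL(2,ℤ)` with
`det P = 1`, to `[[1, t], [0, 1]]` for some integer `t`. -/
theorem parabolic_matrix_conjugate_to_unipotent_upper_triangular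
    (A : Matrix (Fin 2) (Fin 2) ℤ) (hdet : A.det = 1)
    (hchar : A.charpoly = (X - 1) ^ 2) :
    ∃ P : Matrix (Fin 2) (Fin 2) ℤ, P.det = 1 ∧
      ∃ t : ℤ, P⁻¹ * A * P = !![1, t; 0, 1] := by
  have htr : A.trace = 2 := by
    have h := Matrix.trace_eq_neg_charpoly_coeff A
    rw [hchar] at h
    simp [sub_sq, coeff_sub, coeff_add, coeff_one] at h
    linarith
  rw [Matrix.trace_fin_two] at htr
  rw [Matrix.det_fin_two] at hdet
  set a := A 0 0 with ha
  set b := A 0 1 with hb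
  set c := A 1 0 with hc
  set d := A 1 1 with hd
  have hA : A = !![a, b; c, d] := by
    ext i j; fin_cases i <;> fin_cases j <;> rfl
  have hkey : (a - 1) ^ 2 + b * c = 0 := by linear_combination -hdet + a * htr
  by_cases hc0 : c = 0
  · have ha1 : a = 1 := by
      have h0 : (a - 1) ^ 2 = 0 := by linear_combination hkey - b * hc0
      have h1 : a - 1 = 0 := by
        exact pow_eq_zero_iff (two_ne_zero) |>.mp h0
      linarith
    have hd1 : d = 1 := by linarith
    refine ⟨1, Matrix.det_one, b, ?_⟩
    simp only [inv_one, one_mul, mul_one]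
    rw [hA, ha1, hc0, hd1]
  · set a' := a - 1 with ha'
    set g : ℤ := (Int.gcd a' c : ℤ) with hg
    have hgdvd1 : g ∣ a' := Int.gcd_dvd_left a' c
    have hgdvd2 : g ∣ c := Int.gcd_dvd_right a' c
    have hg0 : g ≠ 0 := by
      rw [hg]
      simp only [ne_eq, Int.natCast_eq_zero, Int.gcd_eq_zero_iff]
      tauto
    set x := Int.gcdA a' c with hx
    set y := Int.gcdB a' c with hy
    have hbez : g = a' * x + c * y := Int.gcd_eq_gcd_ab a' c
    obtain ⟨m, hm⟩ := hgdvd1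
    obtain ⟨n, hn⟩ := hgdvd2
    have hmn : m * x + n * y = 1 := by
      have h1 : g * (m * x + n * y) = g * 1 := by
        rw [mul_one]; rw [hm, hn] at hbez; linear_combination -hbez
      exact mul_left_cancel₀ hg0 h1
    set p : ℤ := -a' * y + b * x with hp
    set q : ℤ := -c * y - a' * x with hq
    set t : ℤ := p * x + q * y with ht
    have hkey' : a' ^ 2 + b * c = 0 := by linear_combination hkey + (2 * a - 2 - a') * ha'
    have hcp : c * p = a' * q := by
      linear_combination c * hp - a' * hq + x * hkey'
    have hqn : q = t * n := by
      have h1 : c * t = q * g := by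
        calc c * t = c * p * x + c * q * y := by rw [ht]; ring
        _ = a' * q * x + c * q * y := by rw [hcp]
        _ = q * (a' * x + c * y) := by ring
        _ = q * g := by rw [← hbez]
      have h2 : g * q = g * (t * n) := by rw [hn] at h1; linear_combination -h1
      exact mul_left_cancel₀ hg0 h2
    have hpm : p = t * m := by
      have h1 : a' * t = p * g := by
        calc a' * t = a' * p * x + a' * q * y := by rw [ht]; ring
        _ = a' * p * x + c * p * y := by rw [← hcp]
        _ = p * (a' * x + c * y) := by ring
        _ = p * g := by rw [← hbez]
      have h2 : g * p = g * (t * m) := by rw [hm] at h1; linear_combination -h1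
      exact mul_left_cancel₀ hg0 h2
    set P : Matrix (Fin 2) (Fin 2) ℤ := !![m, -y; n, x] with hP
    have hdetP : P.det = 1 := by
      rw [hP, Matrix.det_fin_two_of]; linarith
    refine ⟨P, hdetP, t, ?_⟩
    have e1 : a' * m + b * n = 0 := by
      have h0 : g * (a' * m + b * n) = g * 0 := by
        rw [mul_zero]; linear_combination hkey' - a' * hm - b * hn
      exact mul_left_cancel₀ hg0 h0
    have e2 : c * m - a' * n = 0 := by
      have h0 : g * (c * m - a' * n) = g * 0 := by
        rw [mul_zero]; linear_combination a' * hn - c * hm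
      exact mul_left_cancel₀ hg0 h0
    have hAP : A * P = P * !![1, t; 0, 1] := by
      rw [hA, hP]
      ext i j
      fin_cases i <;> fin_cases j <;>
        simp [Matrix.mul_apply, Fin.sum_univ_two]
      · linear_combination e1 - m * ha'
      · linear_combination hpm - hp + y * ha'
      · linear_combination e2 + n * ha' + n * htr
      · linear_combination hqn - hq + x * ha' + x * htr
    calc P⁻¹ * A * P = P⁻¹ * (A * P) := by rw [mul_assoc]
      _ = P⁻¹ * (P * !![1, t; 0, 1]) := by rw [hAP]
      _ = (P⁻¹ * P) * !![1, t; 0, 1] := by rw [mul_assoc]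
      _ = !![1, t; 0, 1] := by
          rw [Matrix.nonsing_inv_mul P (by rw [hdetP]; exact isUnit_one), one_mul]
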